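/- Let p ≥ 1 and let f be a polynomial on ℝⁿ with Δᵖ f = 0. Then there exist harmonic polynomials φ_0, …, φ_{p-1} such that f(x) = Σ_{m=0}^{p-1} |x|^{2m} φ_m(x) for all x ∈ ℝⁿ. -/

import Mathlib

open MvPolynomial Finset

noncomputable section
variable {n : ℕ}

/-- polynomial Laplacian -/
def pLap (n : ℕ) : MvPolynomial (Fin n) ℝ →ₗ[ℝ] MvPolynomial (Fin n) ℝ :=
  ∑ i : Fin n, ((pderiv i).toLinearMap ∘ₗ (pderiv i).toLinearMap)

lemma pLap_apply (f : MvPolynomial (Fin n) ℝ) :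
    pLap n f = ∑ i : Fin n, pderiv i (pderiv i f) := by
  simp [pLap, LinearMap.sum_apply]

/-- |x|^2 as a polynomial -/
def r2 (n : ℕ) : MvPolynomial (Fin n) ℝ := ∑ i : Fin n, X i * X i

lemma r2_isHomogeneous : (r2 n).IsHomogeneous 2 := by
  apply IsHomogeneous.sum
  intro i _
  exact (isHomogeneous_X _ _).mul (isHomogeneous_X _ _)

lemma pderiv_r2 (i : Fin n) : pderiv i (r2 n) = 2 * X i := by
  rw [r2, map_sum]
  rw [Finset.sum_eq_single i]
  · simp [pderiv_mul]; ring
  · intro j _ hj; simp [pderiv_mul, pderiv_X_of_ne hj]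
  · simp

lemma degree_eq_sum_univ (s : Fin n →₀ ℕ) : s.degree = ∑ i : Fin n, s i := by
  rw [Finsupp.degree]
  exact Finset.sum_subset (Finset.subset_univ _) (by intro x _ hx; simpa using hx)

lemma X_mul_pderiv_monomial (i : Fin n) (s : Fin n →₀ ℕ) (a : ℝ) :
    X i * pderiv i (monomial s a) = (s i : ℝ) • monomial s a := by
  rw [pderiv_monomial]
  rcases Nat.eq_zero_or_pos (s i) with h | h
  · simp [h]
  · have hs : Finsupp.single i 1 + (s - Finsupp.single i 1) = s := by
      ext j
      simp only [Finsupp.add_apply, Finsupp.tsub_apply, Finsupp.single_apply]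
      split_ifs with hij
      · subst hij; omega
      · omega
    rw [X, monomial_mul, one_mul, hs, smul_monomial, smul_eq_mul, mul_comm]

lemma euler {e : ℕ} {q : MvPolynomial (Fin n) ℝ} (hq : q.IsHomogeneous e) :
    ∑ i : Fin n, X i * pderiv i q = (e : ℝ) • q := by
  calc ∑ i : Fin n, X i * pderiv i q
      = ∑ i : Fin n, ∑ s ∈ q.support, X i * pderiv i (monomial s (coeff s q)) := by
        apply Finset.sum_congr rfl; intro i _
        conv_lhs => rw [← support_sum_monomial_coeff q]
        rw [map_sum, Finset.mul_sum]
    _ = ∑ s ∈ q.support, ∑ i : Fin n, (s i : ℝ) • monomial s (coeff s q) := by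
        rw [Finset.sum_comm]
        simp only [X_mul_pderiv_monomial]
    _ = ∑ s ∈ q.support, (e : ℝ) • monomial s (coeff s q) := by
        apply Finset.sum_congr rfl; intro s hs
        rw [← Finset.sum_smul, ← Nat.cast_sum, ← degree_eq_sum_univ]
        have : s.degree = e := by
          rw [Finsupp.degree_eq_weight_one]
          exact hq (mem_support_iff.mp hs)
        rw [this]
    _ = (e : ℝ) • q := by rw [← Finset.smul_sum, support_sum_monomial_coeff]

lemma C_two : (C 2 : MvPolynomial (Fin n) ℝ) = 2 := map_ofNat C 2
lemma C_four : (C 4 : MvPolynomial (Fin n) ℝ) = 4 := map_ofNat C 4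

lemma smul_eq_C_mul' (a : ℝ) (q : MvPolynomial (Fin n) ℝ) : a • q = C a * q :=
  (smul_eq_C_mul q a)

lemma lap_r2_mul {e : ℕ} {q : MvPolynomial (Fin n) ℝ} (hq : q.IsHomogeneous e) :
    pLap n (r2 n * q) = ((2 * n + 4 * e : ℕ) : ℝ) • q + r2 n * pLap n q := by
  have key : ∀ i : Fin n, pderiv i (pderiv i (r2 n * q)) =
      C 2 * q + C 4 * (X i * pderiv i q) + r2 n * pderiv i (pderiv i q) := by
    intro i
    have p2 : pderiv i (2 : MvPolynomial (Fin n) ℝ) = 0 := by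
      rw [← C_two]; exact pderiv_C
    simp only [pderiv_mul, pderiv_r2, map_add, pderiv_X_self, p2]
    rw [C_two, C_four]
    ring
  rw [pLap_apply, Finset.sum_congr rfl fun i _ => key i, Finset.sum_add_distrib,
    Finset.sum_add_distrib, ← Finset.mul_sum, ← Finset.mul_sum, ← Finset.mul_sum, euler hq,
    Finset.sum_const, Finset.card_univ, Fintype.card_fin, ← pLap_apply]
  simp only [nsmul_eq_mul, smul_eq_C_mul', Nat.cast_add, Nat.cast_mul, Nat.cast_ofNat,
    map_add, map_mul, map_natCast, C_two, C_four]
  ring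

lemma pderiv_isHomogeneous {e : ℕ} {q : MvPolynomial (Fin n) ℝ} (hq : q.IsHomogeneous e)
    (i : Fin n) : (pderiv i q).IsHomogeneous (e - 1) := by
  conv_lhs => rw [← support_sum_monomial_coeff q]
  rw [map_sum]
  apply IsHomogeneous.sum
  intro s hs
  rw [pderiv_monomial]
  rcases Nat.eq_zero_or_pos (s i) with h | h
  · rw [h]; simp only [Nat.cast_zero, mul_zero, map_zero]; exact isHomogeneous_zero _ _ _
  · apply isHomogeneous_monomial
    have hdeg : s.degree = e := by
      rw [Finsupp.degree_eq_weight_one]; exact hq (mem_support_iff.mp hs)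
    have h1 : ∀ j, j ≠ i → ((s - Finsupp.single i 1 : Fin n →₀ ℕ)) j = s j := by
      intro j hj
      rw [Finsupp.tsub_apply, Finsupp.single_apply, if_neg (fun h => hj h.symm), Nat.sub_zero]
    have h2 : ((s - Finsupp.single i 1 : Fin n →₀ ℕ)) i = s i - 1 := by
      rw [Finsupp.tsub_apply, Finsupp.single_apply, if_pos rfl]
    have h3 : s i + ∑ j ∈ Finset.univ.erase i, s j = e := by
      rw [Finset.add_sum_erase _ _ (Finset.mem_univ i), ← degree_eq_sum_univ, hdeg]
    rw [degree_eq_sum_univ, ← Finset.add_sum_erase _ _ (Finset.mem_univ i),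
      Finset.sum_congr rfl (fun j hj => h1 j (Finset.ne_of_mem_erase hj)), h2]
    have h4 : ∑ j ∈ Finset.univ.erase i, s j = (Finset.univ.erase i).sum ⇑s := rfl
    omega

lemma lap_isHomogeneous {e : ℕ} {q : MvPolynomial (Fin n) ℝ} (hq : q.IsHomogeneous e) :
    (pLap n q).IsHomogeneous (e - 2) := by
  rw [pLap_apply]
  apply IsHomogeneous.sum
  intro i _
  have := pderiv_isHomogeneous (pderiv_isHomogeneous hq i) i
  rwa [show e - 1 - 1 = e - 2 by omega] at this

lemma pderiv_eq_zero_of_homog_zero {q : MvPolynomial (Fin n) ℝ} (hq : q.IsHomogeneous 0)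
    (i : Fin n) : pderiv i q = 0 := by
  conv_lhs => rw [← support_sum_monomial_coeff q]
  rw [map_sum]
  apply Finset.sum_eq_zero
  intro s hs
  have hdeg : s.degree = 0 := by
    rw [Finsupp.degree_eq_weight_one]; exact hq (mem_support_iff.mp hs)
  have : s = 0 := (Finsupp.degree_eq_zero_iff s).mp hdeg
  subst this
  rw [pderiv_monomial]
  simp

lemma lap_eq_zero_of_lt_two {e : ℕ} {q : MvPolynomial (Fin n) ℝ} (hq : q.IsHomogeneous e)
    (he : e < 2) : pLap n q = 0 := by
  rw [pLap_apply]
  apply Finset.sum_eq_zero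
  intro i _
  have h1 : (pderiv i q).IsHomogeneous 0 := by
    have := pderiv_isHomogeneous hq i
    rwa [show e - 1 = 0 by omega] at this
  rw [pderiv_eq_zero_of_homog_zero h1]

lemma lap_iter_isHomogeneous {e : ℕ} {q : MvPolynomial (Fin n) ℝ} (hq : q.IsHomogeneous e)
    (k : ℕ) : ((pLap n)^[k] q).IsHomogeneous (e - 2 * k) := by
  induction k generalizing e q with
  | zero => simpa using hq
  | succ k IH =>
    rw [Function.iterate_succ_apply]
    have := IH (lap_isHomogeneous hq)
    rwa [show e - 2 - 2 * k = e - 2 * (k + 1) by omega] at this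

lemma smul_zero_cancel {c : ℝ} (hc : c ≠ 0) {q : MvPolynomial (Fin n) ℝ}
    (h : c • q = 0) : q = 0 := by
  have : c⁻¹ • (c • q) = q := by rw [smul_smul, inv_mul_cancel₀ hc, one_smul]
  rw [h, smul_zero] at this
  exact this.symm

lemma lap_iter_of_zero (k : ℕ) : (pLap n)^[k] (0 : MvPolynomial (Fin n) ℝ) = 0 := by
  induction k with
  | zero => rfl
  | succ k IH => rw [Function.iterate_succ_apply, map_zero, IH]

lemma lap_iter_eq_zero {e : ℕ} {q : MvPolynomial (Fin n) ℝ} (hq : q.IsHomogeneous e)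
    {k : ℕ} (hk : e < 2 * k) : (pLap n)^[k] q = 0 := by
  induction k generalizing e q with
  | zero => omega
  | succ k IH =>
    rw [Function.iterate_succ_apply]
    rcases Nat.lt_or_ge e 2 with h | h
    · rw [lap_eq_zero_of_lt_two hq h, lap_iter_of_zero]
    · exact IH (lap_isHomogeneous hq) (by omega)

/-- Key injectivity lemma. -/
lemma key_zero : ∀ e : ℕ, ∀ q : MvPolynomial (Fin n) ℝ, q.IsHomogeneous e →
    ∀ c : ℝ, 0 < c → c • q + r2 n * pLap n q = 0 → q = 0 := by
  intro e
  induction e using Nat.strong_induction_on with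
  | _ e IH =>
    intro q hq c hc h
    rcases Nat.lt_or_ge e 2 with he | he
    · rw [lap_eq_zero_of_lt_two hq he, mul_zero, add_zero] at h
      exact smul_zero_cancel (ne_of_gt hc) h
    · have hq' : (pLap n q).IsHomogeneous (e - 2) := lap_isHomogeneous hq
      have h2 : (c + ((2 * n + 4 * (e - 2) : ℕ) : ℝ)) • pLap n q + r2 n * pLap n (pLap n q) = 0 := by
        have := congrArg (pLap n) h
        rw [map_add, map_zero, LinearMap.map_smul, lap_r2_mul hq', ← add_assoc, ← add_smul] at this
        exact this
      have hq0 : pLap n q = 0 :=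
        IH (e - 2) (by omega) _ hq' _ (by positivity) h2
      rw [hq0, mul_zero, add_zero] at h
      exact smul_zero_cancel (ne_of_gt hc) h

lemma lap_iter_r2_mul {e : ℕ} {q : MvPolynomial (Fin n) ℝ} (hq : q.IsHomogeneous e) :
    ∀ k : ℕ, (pLap n)^[k + 1] (r2 n * q) =
      (2 * ((k : ℝ) + 1) * (2 * (e : ℝ) + (n : ℝ)) - 4 * ((k : ℝ) + 1) * (k : ℝ)) •
          (pLap n)^[k] q + r2 n * (pLap n)^[k + 1] q := by
  intro k
  induction k with
  | zero =>
    simp only [Nat.cast_zero, Function.iterate_one, Function.iterate_zero, id_eq, zero_add]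
    rw [lap_r2_mul hq]
    have : ((2 * n + 4 * e : ℕ) : ℝ) = 2 * (0 + 1) * (2 * (e : ℝ) + n) - 4 * (0 + 1) * 0 := by
      push_cast; ring
    rw [this]
    norm_num
  | succ k IH =>
    by_cases hB : (pLap n)^[k + 1] q = 0
    · have hB2 : (pLap n)^[k + 1 + 1] q = 0 := by
        rw [Function.iterate_succ_apply', hB, map_zero]
      rw [Function.iterate_succ_apply' (pLap n) (k + 1) (r2 n * q), IH, map_add,
        LinearMap.map_smul, hB, hB2, ← Function.iterate_succ_apply' (pLap n) k q, hB]
      simp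
    · have he2 : 2 * (k + 1) ≤ e := by
        by_contra hlt
        exact hB (lap_iter_eq_zero hq (by omega))
      have hhom : ((pLap n)^[k + 1] q).IsHomogeneous (e - 2 * (k + 1)) :=
        lap_iter_isHomogeneous hq (k + 1)
      rw [Function.iterate_succ_apply' (pLap n) (k + 1) (r2 n * q), IH, map_add,
        LinearMap.map_smul, lap_r2_mul hhom, ← Function.iterate_succ_apply' (pLap n) k q,
        ← Function.iterate_succ_apply' (pLap n) (k + 1) q, ← add_assoc, ← add_smul]
      have hc : (2 * ((k : ℝ) + 1) * (2 * (e : ℝ) + n) - 4 * ((k : ℝ) + 1) * k)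
          + ((2 * n + 4 * (e - 2 * (k + 1)) : ℕ) : ℝ)
          = 2 * ((k : ℝ) + 1 + 1) * (2 * (e : ℝ) + n) - 4 * ((k : ℝ) + 1 + 1) * ((k : ℝ) + 1) := by
        push_cast [Nat.cast_sub he2]
        ring
      rw [hc]
      push_cast
      norm_num

lemma exists_preimage (hn : 1 ≤ n) {e : ℕ} {w : MvPolynomial (Fin n) ℝ}
    (hw : w.IsHomogeneous e) :
    ∃ q : MvPolynomial (Fin n) ℝ, q.IsHomogeneous e ∧ pLap n (r2 n * q) = w := by
  set V := homogeneousSubmodule (Fin n) ℝ e with hV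
  have hle : V ≤ restrictTotalDegree (Fin n) ℝ e := by
    intro q hq
    rw [mem_restrictTotalDegree]
    exact IsHomogeneous.totalDegree_le hq
  haveI : FiniteDimensional ℝ (restrictTotalDegree (Fin n) ℝ e) := inferInstance
  haveI : FiniteDimensional ℝ V := Submodule.finiteDimensional_of_le hle
  have hmem : ∀ q : MvPolynomial (Fin n) ℝ, q.IsHomogeneous e →
      (pLap n (r2 n * q)).IsHomogeneous e := by
    intro q hq
    have h1 : (r2 n * q).IsHomogeneous (2 + e) := r2_isHomogeneous.mul hq
    have := lap_isHomogeneous h1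
    rwa [show 2 + e - 2 = e by omega] at this
  let T : V →ₗ[ℝ] V := LinearMap.codRestrict V
    (((pLap n).comp (LinearMap.mulLeft ℝ (r2 n))).comp V.subtype)
    (fun x => hmem x.1 x.2)
  have hinj : Function.Injective T := by
    rw [← LinearMap.ker_eq_bot, LinearMap.ker_eq_bot']
    intro x hx
    have h0 : pLap n (r2 n * (x : MvPolynomial (Fin n) ℝ)) = 0 := by
      have := congrArg (Subtype.val) hx
      exact this
    rw [lap_r2_mul x.2] at h0
    have hc : (0 : ℝ) < ((2 * n + 4 * e : ℕ) : ℝ) := by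
      have : 0 < 2 * n + 4 * e := by omega
      exact_mod_cast this
    have := key_zero e x.1 x.2 _ hc h0
    exact Subtype.ext this
  obtain ⟨q, hq⟩ := (LinearMap.injective_iff_surjective.mp hinj) ⟨w, hw⟩
  refine ⟨q.1, q.2, ?_⟩
  have := congrArg (Subtype.val) hq
  exact this

/-- Almansi decomposition for homogeneous polynomials. -/
lemma decomp_homog (hn : 1 ≤ n) : ∀ d : ℕ, ∀ g : MvPolynomial (Fin n) ℝ, g.IsHomogeneous d →
    ∀ p : ℕ, 1 ≤ p → (pLap n)^[p] g = 0 →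
    ∃ h : ℕ → MvPolynomial (Fin n) ℝ, (∀ m, pLap n (h m) = 0) ∧ (∀ m, p ≤ m → h m = 0) ∧
      g = ∑ m ∈ Finset.range p, (r2 n) ^ m * h m := by
  intro d
  induction d using Nat.strong_induction_on with
  | _ d IH =>
    intro g hg p hp hpg
    by_cases hg1 : pLap n g = 0
    · refine ⟨fun m => if m = 0 then g else 0, ?_, ?_, ?_⟩
      · intro m
        by_cases h : m = 0 <;> simp [h, hg1]
      · intro m hm
        have : m ≠ 0 := by omega
        simp [this]
      · rw [Finset.sum_eq_single_of_mem 0 (Finset.mem_range.mpr (by omega))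
          (fun m _ hm => by simp [hm])]
        simp
    · -- nontrivial case
      have hp2 : 2 ≤ p := by
        by_contra h
        have : p = 1 := by omega
        subst this
        exact hg1 hpg
      have hd2 : 2 ≤ d := by
        by_contra h
        exact hg1 (lap_eq_zero_of_lt_two hg (by omega))
      set e := d - 2 with he
      have hw : (pLap n g).IsHomogeneous e := lap_isHomogeneous hg
      obtain ⟨q, hq, hq2⟩ := exists_preimage hn hw
      obtain ⟨k, hk⟩ : ∃ k, p = k + 2 := ⟨p - 2, by omega⟩
      subst hk
      have h5 : (pLap n)^[k + 2] (r2 n * q) = 0 := by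
        calc (pLap n)^[k + 2] (r2 n * q) = (pLap n)^[k + 1] (pLap n (r2 n * q)) := by
              rw [Function.iterate_succ_apply]
          _ = (pLap n)^[k + 1] (pLap n g) := by rw [hq2]
          _ = (pLap n)^[k + 2] g := by rw [← Function.iterate_succ_apply]
          _ = 0 := hpg
      have hu : (pLap n)^[k + 1] q = 0 := by
        by_cases hu0 : (pLap n)^[k + 1] q = 0
        · exact hu0
        exfalso
        have hee : 2 * (k + 1) ≤ e := by
          by_contra hlt
          exact hu0 (lap_iter_eq_zero hq (by omega))
        have hcomm := lap_iter_r2_mul hq (k + 1)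
        rw [Function.iterate_succ_apply' (pLap n) (k + 1) q] at hcomm
        have h6 := hcomm.symm.trans h5
        push_cast at h6
        have hhomu : ((pLap n)^[k + 1] q).IsHomogeneous (e - 2 * (k + 1)) :=
          lap_iter_isHomogeneous hq (k + 1)
        have hcpos : (0 : ℝ) < 2 * ((k : ℝ) + 1 + 1) * (2 * (e : ℝ) + (n : ℝ))
            - 4 * ((k : ℝ) + 1 + 1) * ((k : ℝ) + 1) := by
          have h1 : (2 * ((k : ℝ) + 1)) ≤ (e : ℝ) := by exact_mod_cast hee
          have h2 : (1 : ℝ) ≤ (n : ℝ) := by exact_mod_cast hn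
          nlinarith [Nat.cast_nonneg (α := ℝ) k]
        exact hu0 (key_zero _ _ hhomu _ hcpos h6)
      -- apply induction hypothesis to q
      obtain ⟨h', hh1, hh2, hh3⟩ := IH e (by omega) q hq (k + 1) (by omega) hu
      refine ⟨fun m => if m = 0 then g - r2 n * q else h' (m - 1), ?_, ?_, ?_⟩
      · intro m
        by_cases h : m = 0
        · subst h
          show pLap n (if (0 : ℕ) = 0 then g - r2 n * q else h' (0 - 1)) = 0
          rw [if_pos rfl, map_sub, hq2, sub_self]
        · show pLap n (if m = 0 then g - r2 n * q else h' (m - 1)) = 0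
          rw [if_neg h]
          exact hh1 (m - 1)
      · intro m hm
        show (if m = 0 then g - r2 n * q else h' (m - 1)) = 0
        rw [if_neg (show ¬ m = 0 by omega)]
        exact hh2 (m - 1) (by omega)
      · rw [show k + 2 = k + 1 + 1 from rfl, Finset.sum_range_succ']
        simp only [Nat.add_sub_cancel, if_pos rfl, pow_zero, one_mul]
        have hsum : ∑ i ∈ Finset.range (k + 1),
            (r2 n) ^ (i + 1) * (if i + 1 = 0 then g - r2 n * q else h' i)
            = r2 n * ∑ i ∈ Finset.range (k + 1), (r2 n) ^ i * h' i := by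
          rw [Finset.mul_sum]
          apply Finset.sum_congr rfl
          intro i _
          rw [if_neg (by omega), pow_succ]
          ring
        rw [hsum, ← hh3]
        simp only [↓reduceIte]
        ring

lemma lap_iter_homogeneousComponent (p : ℕ) (f : MvPolynomial (Fin n) ℝ)
    (hf : (pLap n)^[p] f = 0) (d : ℕ) :
    (pLap n)^[p] (homogeneousComponent d f) = 0 := by
  rcases Nat.lt_or_ge d (2 * p) with hd | hd
  · exact lap_iter_eq_zero (homogeneousComponent_isHomogeneous _ _) (by omega)
  rcases Nat.lt_or_ge (f.totalDegree) d with hD | hD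
  · rw [homogeneousComponent_eq_zero d f hD, lap_iter_of_zero]
  have hiter : ∀ g : MvPolynomial (Fin n) ℝ, (pLap n)^[p] g = ((pLap n) ^ p) g :=
    fun g => (Module.End.pow_apply (pLap n) p g).symm
  have key : (pLap n)^[p] (homogeneousComponent d f)
      = homogeneousComponent (d - 2 * p) ((pLap n)^[p] f) := by
    conv_rhs => rw [← sum_homogeneousComponent f]
    simp only [hiter]
    rw [map_sum, map_sum]
    rw [Finset.sum_eq_single d]
    · have hhom : (((pLap n) ^ p) (homogeneousComponent d f)).IsHomogeneous (d - 2 * p) := by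
        rw [← hiter]
        exact lap_iter_isHomogeneous (homogeneousComponent_isHomogeneous _ _) p
      rw [homogeneousComponent_of_mem hhom, if_pos rfl]
    · intro d' _ hd'
      rcases Nat.lt_or_ge d' (2 * p) with h2 | h2
      · rw [← hiter, lap_iter_eq_zero (homogeneousComponent_isHomogeneous _ _) (by omega), map_zero]
      · have hhom : (((pLap n) ^ p) (homogeneousComponent d' f)).IsHomogeneous (d' - 2 * p) := by
          rw [← hiter]
          exact lap_iter_isHomogeneous (homogeneousComponent_isHomogeneous _ _) p
        rw [homogeneousComponent_of_mem hhom, if_neg (by omega)]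
    · intro hmem
      exact absurd (Finset.mem_range.mpr (by omega)) hmem
  rw [key, hf, map_zero]

/-- Almansi decomposition, algebraic form. -/
theorem decomp_main (hn : 1 ≤ n) (p : ℕ) (hp : 1 ≤ p) (f : MvPolynomial (Fin n) ℝ)
    (hf : (pLap n)^[p] f = 0) :
    ∃ φ : ℕ → MvPolynomial (Fin n) ℝ, (∀ m, pLap n (φ m) = 0) ∧
      f = ∑ m ∈ Finset.range p, (r2 n) ^ m * φ m := by
  have H : ∀ d : ℕ, ∃ h : ℕ → MvPolynomial (Fin n) ℝ, (∀ m, pLap n (h m) = 0) ∧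
      (∀ m, p ≤ m → h m = 0) ∧
      homogeneousComponent d f = ∑ m ∈ Finset.range p, (r2 n) ^ m * h m :=
    fun d => decomp_homog hn d _ (homogeneousComponent_isHomogeneous _ _) p hp
      (lap_iter_homogeneousComponent p f hf d)
  choose h hH1 hH2 hH3 using H
  refine ⟨fun m => ∑ d ∈ Finset.range (f.totalDegree + 1), h d m, ?_, ?_⟩
  · intro m
    rw [map_sum]
    exact Finset.sum_eq_zero fun d _ => hH1 d m
  · conv_lhs => rw [← sum_homogeneousComponent f]
    rw [Finset.sum_congr rfl (fun d _ => hH3 d)]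
    rw [Finset.sum_comm]
    apply Finset.sum_congr rfl
    intro m _
    rw [Finset.mul_sum]


/-- Evaluation of a polynomial as a function on Euclidean space. -/
def evalFun (f : MvPolynomial (Fin n) ℝ) : EuclideanSpace ℝ (Fin n) → ℝ :=
  fun y => MvPolynomial.eval (fun i => y i) f

/-- The candidate derivative of `evalFun f` at `x`. -/
def Dp (f : MvPolynomial (Fin n) ℝ) (x : EuclideanSpace ℝ (Fin n)) :
    EuclideanSpace ℝ (Fin n) →L[ℝ] ℝ :=
  ∑ i : Fin n, evalFun (pderiv i f) x • (EuclideanSpace.proj i : EuclideanSpace ℝ (Fin n) →L[ℝ] ℝ)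

lemma Dp_apply (f : MvPolynomial (Fin n) ℝ) (x v : EuclideanSpace ℝ (Fin n)) :
    Dp f x v = ∑ i : Fin n, evalFun (pderiv i f) x * v i := by
  simp [Dp, ContinuousLinearMap.sum_apply]

lemma hasFDerivAt_evalFun (f : MvPolynomial (Fin n) ℝ) (x : EuclideanSpace ℝ (Fin n)) :
    HasFDerivAt (evalFun f) (Dp f x) x := by
  induction f using MvPolynomial.induction_on with
  | C a =>
    have h0 : Dp (C a : MvPolynomial (Fin n) ℝ) x = 0 := by
      unfold Dp
      rw [Finset.sum_eq_zero]
      intro i _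
      rw [pderiv_C]
      simp [evalFun]
    rw [h0]
    have : evalFun (C a : MvPolynomial (Fin n) ℝ) = fun _ => a := by
      funext y; simp [evalFun]
    rw [this]
    exact hasFDerivAt_const a x
  | add p q hp hq =>
    have h0 : Dp (p + q) x = Dp p x + Dp q x := by
      unfold Dp
      rw [← Finset.sum_add_distrib]
      apply Finset.sum_congr rfl
      intro i _
      rw [map_add]
      have : evalFun (pderiv i p + pderiv i q) x = evalFun (pderiv i p) x
          + evalFun (pderiv i q) x := by simp [evalFun]
      rw [this, add_smul]
    have h1 : evalFun (p + q) = fun y => evalFun p y + evalFun q y := by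
      funext y; simp [evalFun]
    rw [h0, h1]
    exact hp.add hq
  | mul_X p i hp =>
    have h1 : evalFun (p * X i) = fun y => evalFun p y * y i := by
      funext y; simp [evalFun]
    have hXi : HasFDerivAt (fun y : EuclideanSpace ℝ (Fin n) => y i)
        (EuclideanSpace.proj i : EuclideanSpace ℝ (Fin n) →L[ℝ] ℝ) x :=
      (EuclideanSpace.proj i : EuclideanSpace ℝ (Fin n) →L[ℝ] ℝ).hasFDerivAt
    have h0 : Dp (p * X i) x = evalFun p x • (EuclideanSpace.proj i :
        EuclideanSpace ℝ (Fin n) →L[ℝ] ℝ) + x i • Dp p x := by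
      unfold Dp
      rw [Finset.smul_sum]
      have : ∀ j : Fin n, evalFun (pderiv j (p * X i)) x • (EuclideanSpace.proj j :
          EuclideanSpace ℝ (Fin n) →L[ℝ] ℝ)
          = (if j = i then evalFun p x • (EuclideanSpace.proj i :
              EuclideanSpace ℝ (Fin n) →L[ℝ] ℝ) else 0)
            + x i • (evalFun (pderiv j p) x • (EuclideanSpace.proj j :
              EuclideanSpace ℝ (Fin n) →L[ℝ] ℝ)) := by
        intro j
        rcases eq_or_ne j i with rfl | hj
        · rw [if_pos rfl, pderiv_mul, pderiv_X_self]
          have h2 : evalFun (pderiv j p * X j + p * 1) x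
              = evalFun (pderiv j p) x * x j + evalFun p x := by simp [evalFun]
          rw [h2]
          module
        · rw [if_neg hj, pderiv_mul, pderiv_X_of_ne hj.symm]
          have h2 : evalFun (pderiv j p * X i + p * 0) x
              = evalFun (pderiv j p) x * x i := by simp [evalFun]
          rw [h2]
          module
      rw [Finset.sum_congr rfl (fun j _ => this j), Finset.sum_add_distrib,
        Finset.sum_ite_eq' Finset.univ i]
      simp
    rw [h0, h1]
    exact hp.mul hXi

lemma fderiv_evalFun (f : MvPolynomial (Fin n) ℝ) (x : EuclideanSpace ℝ (Fin n)) :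
    fderiv ℝ (evalFun f) x = Dp f x := (hasFDerivAt_evalFun f x).fderiv

lemma hasFDerivAt_Dp (f : MvPolynomial (Fin n) ℝ) (x : EuclideanSpace ℝ (Fin n)) :
    HasFDerivAt (fun y => fderiv ℝ (evalFun f) y)
      (∑ i : Fin n, (Dp (pderiv i f) x).smulRight
        (EuclideanSpace.proj i : EuclideanSpace ℝ (Fin n) →L[ℝ] ℝ)) x := by
  have h : (fun y => fderiv ℝ (evalFun f) y) = fun y => ∑ i : Fin n,
      evalFun (pderiv i f) y • (EuclideanSpace.proj i : EuclideanSpace ℝ (Fin n) →L[ℝ] ℝ) := by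
    funext y
    rw [fderiv_evalFun]
    rfl
  rw [h]
  exact HasFDerivAt.fun_sum (fun i _ => (hasFDerivAt_evalFun (pderiv i f) x).smul_const
    (EuclideanSpace.proj i : EuclideanSpace ℝ (Fin n) →L[ℝ] ℝ))

lemma Dp_single (f : MvPolynomial (Fin n) ℝ) (x : EuclideanSpace ℝ (Fin n)) (i : Fin n) :
    Dp f x (EuclideanSpace.single i (1 : ℝ)) = evalFun (pderiv i f) x := by
  rw [Dp_apply]
  rw [Finset.sum_eq_single i]
  · simp
  · intro j _ hj
    rw [EuclideanSpace.single_apply, if_neg hj, mul_zero]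
  · intro h; exact absurd (Finset.mem_univ i) h

lemma second_deriv_evalFun (f : MvPolynomial (Fin n) ℝ) (x : EuclideanSpace ℝ (Fin n))
    (i : Fin n) :
    iteratedFDeriv ℝ 2 (evalFun f) x (fun _ => EuclideanSpace.single i (1 : ℝ))
      = evalFun (pderiv i (pderiv i f)) x := by
  rw [iteratedFDeriv_two_apply, (hasFDerivAt_Dp f x).fderiv]
  rw [ContinuousLinearMap.sum_apply, ContinuousLinearMap.sum_apply]
  rw [Finset.sum_eq_single i]
  · rw [ContinuousLinearMap.smulRight_apply, ContinuousLinearMap.smul_apply, Dp_single]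
    have : (EuclideanSpace.proj i : EuclideanSpace ℝ (Fin n) →L[ℝ] ℝ)
        (EuclideanSpace.single i (1 : ℝ)) = 1 := by simp
    rw [this, smul_eq_mul, mul_one]
  · intro j _ hj
    rw [ContinuousLinearMap.smulRight_apply, ContinuousLinearMap.smul_apply]
    have : (EuclideanSpace.proj j : EuclideanSpace ℝ (Fin n) →L[ℝ] ℝ)
        (EuclideanSpace.single i (1 : ℝ)) = 0 := by
      simp [EuclideanSpace.single_apply, hj]
    rw [this, smul_zero]
  · intro h; exact absurd (Finset.mem_univ i) h


lemma eval_r2 (x : EuclideanSpace ℝ (Fin n)) :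
    evalFun (r2 n) x = ‖x‖ ^ 2 := by
  have h1 : ‖x‖ ^ 2 = ∑ i : Fin n, ‖x i‖ ^ 2 := by
    rw [EuclideanSpace.norm_eq, Real.sq_sqrt]
    positivity
  rw [h1]
  simp [evalFun, r2, Real.norm_eq_abs, sq_abs, sq]

end

/-- The Laplacian of `f : ℝⁿ → ℝ` at `x`, as the trace of the second derivative. -/
noncomputable def stmtLaplacian {n : ℕ} (f : EuclideanSpace ℝ (Fin n) → ℝ)
    (x : EuclideanSpace ℝ (Fin n)) : ℝ :=
  ∑ i : Fin n, iteratedFDeriv ℝ 2 f x (fun _ => EuclideanSpace.single i (1 : ℝ))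

section glue
variable {n : ℕ}

lemma stmtLaplacian_evalFun (f : MvPolynomial (Fin n) ℝ) :
    stmtLaplacian (evalFun f) = evalFun (pLap n f) := by
  funext x
  unfold stmtLaplacian
  rw [Finset.sum_congr rfl (fun i _ => second_deriv_evalFun f x i)]
  rw [pLap_apply]
  simp only [evalFun, map_sum]

lemma stmtLaplacian_iter_evalFun (p : ℕ) (f : MvPolynomial (Fin n) ℝ) :
    stmtLaplacian^[p] (evalFun f) = evalFun ((pLap n)^[p] f) := by
  induction p generalizing f with
  | zero => rfl
  | succ p IH =>
    rw [Function.iterate_succ_apply, Function.iterate_succ_apply,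
      stmtLaplacian_evalFun, IH]

end glue

theorem stmt18_almansi_decomposition {n : ℕ} (p : ℕ) (hp : 1 ≤ p)
    (f : MvPolynomial (Fin n) ℝ)
    (hf : ∀ x, (stmtLaplacian^[p] (fun y => MvPolynomial.eval (fun i => y i) f)) x = 0) :
    ∃ φ : Fin p → MvPolynomial (Fin n) ℝ,
      (∀ m : Fin p, ∀ x,
        stmtLaplacian (fun y => MvPolynomial.eval (fun i => y i) (φ m)) x = 0) ∧
      ∀ x : EuclideanSpace ℝ (Fin n),
        MvPolynomial.eval (fun i => x i) f
          = ∑ m : Fin p, ‖x‖ ^ (2 * (m : ℕ)) * MvPolynomial.eval (fun i => x i) (φ m) := by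
  rcases Nat.eq_zero_or_pos n with hn0 | hn
  · -- trivial case `n = 0` : the Laplacian is an empty sum
    subst hn0
    refine ⟨fun m => if (m : ℕ) = 0 then f else 0, ?_, ?_⟩
    · intro m x
      unfold stmtLaplacian
      simp
    · intro x
      rw [Finset.sum_eq_single (⟨0, by omega⟩ : Fin p)]
      · simp
      · intro m _ hm
        have : (m : ℕ) ≠ 0 := by
          intro h
          exact hm (Fin.ext h)
        simp [this]
      · intro h; exact absurd (Finset.mem_univ _) h
  · -- main case
    have hlap : (pLap n)^[p] f = 0 := by
      apply MvPolynomial.funext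
      intro x
      have hx := hf ((WithLp.equiv 2 (Fin n → ℝ)).symm x)
      rw [show (fun y : EuclideanSpace ℝ (Fin n) => MvPolynomial.eval (fun i => y i) f)
        = evalFun f from rfl, stmtLaplacian_iter_evalFun] at hx
      rw [map_zero]
      convert hx using 2
      rfl
    obtain ⟨φ', hφ1, hφ2⟩ := decomp_main hn p hp f hlap
    refine ⟨fun m => φ' (m : ℕ), ?_, ?_⟩
    · intro m x
      rw [show (fun y : EuclideanSpace ℝ (Fin n) => MvPolynomial.eval (fun i => y i) (φ' (m : ℕ)))
        = evalFun (φ' (m : ℕ)) from rfl, stmtLaplacian_evalFun, hφ1]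
      simp [evalFun]
    · intro x
      have h1 : MvPolynomial.eval (fun i => x i) f = evalFun f x := rfl
      rw [h1, hφ2]
      have h2 : evalFun (∑ m ∈ Finset.range p, (r2 n) ^ m * φ' m) x
          = ∑ m ∈ Finset.range p, (‖x‖ ^ 2) ^ m * evalFun (φ' m) x := by
        simp only [evalFun, map_sum, map_mul, map_pow]
        apply Finset.sum_congr rfl
        intro m _
        rw [show MvPolynomial.eval (fun i => x i) (r2 n) = evalFun (r2 n) x from rfl, eval_r2]
      rw [h2, ← Fin.sum_univ_eq_sum_range (fun m => (‖x‖ ^ 2) ^ m * evalFun (φ' m) x) p]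
      apply Finset.sum_congr rfl
      intro m _
      rw [← pow_mul]
      rfl
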